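/- arXiv:2604.19695 — 3 statements merged into one kernel-verified Lean document; each statement's English description precedes it below -/
import Mathlib

section
/- Let λ > 0, γ ∈ [0,1), K ≥ 1. Let V_λ and V₀ be bounded functions on a state space S satisfying V_λ(s) = F_λ(Q_λ,s) and V₀(s) = max(Q_{0,s}), where Q_{λ,s}(a) = r(s,a) + γ V_λ(z(s,a)) and Q_{0,s}(a) = r(s,a) + γ V₀(z(s,a)) for a deterministic transition z. Then sup_s |V_λ(s) − V₀(s)| ≤ λ log K / (1 − γ). -/
open Real Finset

lemma lse_bounds {K : ℕ} (hK : 0 < K) (lam : ℝ) (hlam : 0 < lam) (x : Fin K → ℝ) :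
    Finset.univ.sup' (Finset.univ_nonempty_iff.mpr (Fin.pos_iff_nonempty.mp hK)) x
      ≤ lam * Real.log (∑ a, Real.exp (x a / lam)) ∧
    lam * Real.log (∑ a, Real.exp (x a / lam)) ≤
      Finset.univ.sup' (Finset.univ_nonempty_iff.mpr (Fin.pos_iff_nonempty.mp hK)) x
        + lam * Real.log K := by
  have ne : (Finset.univ : Finset (Fin K)).Nonempty :=
    Finset.univ_nonempty_iff.mpr (Fin.pos_iff_nonempty.mp hK)
  set M := Finset.univ.sup' ne x with hM
  have hsum_pos : 0 < ∑ a, Real.exp (x a / lam) :=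
    Finset.sum_pos (fun a _ => Real.exp_pos _) ne
  constructor
  · obtain ⟨a₀, _, ha₀⟩ := Finset.exists_mem_eq_sup' ne x
    have h1 : Real.exp (x a₀ / lam) ≤ ∑ a, Real.exp (x a / lam) :=
      Finset.single_le_sum (f := fun a => Real.exp (x a / lam))
        (fun a _ => (Real.exp_pos _).le) (Finset.mem_univ a₀)
    have h2 : x a₀ / lam ≤ Real.log (∑ a, Real.exp (x a / lam)) := by
      calc x a₀ / lam = Real.log (Real.exp (x a₀ / lam)) := (Real.log_exp _).symm
        _ ≤ _ := Real.log_le_log (Real.exp_pos _) h1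
    have hx : x a₀ ≤ lam * Real.log (∑ a, Real.exp (x a / lam)) := by
      have h3 := mul_le_mul_of_nonneg_left h2 hlam.le
      calc x a₀ = lam * (x a₀ / lam) := by field_simp
        _ ≤ _ := h3
    rw [hM, ha₀]
    exact hx
  · have h1 : ∑ a, Real.exp (x a / lam) ≤ (K : ℝ) * Real.exp (M / lam) := by
      calc ∑ a, Real.exp (x a / lam) ≤ ∑ _a : Fin K, Real.exp (M / lam) := by
            apply Finset.sum_le_sum
            intro a _
            apply Real.exp_le_exp.mpr
            gcongr
            exact Finset.le_sup' x (Finset.mem_univ a)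
        _ = (K : ℝ) * Real.exp (M / lam) := by
            simp [Finset.sum_const, nsmul_eq_mul]
    have hKpos : (0:ℝ) < K := by exact_mod_cast hK
    have h2 : Real.log (∑ a, Real.exp (x a / lam)) ≤ Real.log K + M / lam := by
      calc Real.log (∑ a, Real.exp (x a / lam))
          ≤ Real.log ((K : ℝ) * Real.exp (M / lam)) := Real.log_le_log hsum_pos h1
        _ = Real.log K + M / lam := by
            rw [Real.log_mul (ne_of_gt hKpos) (ne_of_gt (Real.exp_pos _)), Real.log_exp]
    have := mul_le_mul_of_nonneg_left h2 hlam.le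
    have hMdiv : lam * (M / lam) = M := by field_simp
    nlinarith

theorem stmt_10 (S : Type*) (K : ℕ) (hK : 0 < K) (lam : ℝ) (hlam : 0 < lam)
    (γ : ℝ) (hγ : 0 ≤ γ ∧ γ < 1) (r : S → Fin K → ℝ) (z : S → Fin K → S)
    (Vl V0 : S → ℝ) (C : ℝ) (hbound : ∀ s, |Vl s| ≤ C ∧ |V0 s| ≤ C)
    (hVl : ∀ s, Vl s = lam * Real.log (∑ a, Real.exp ((r s a + γ * Vl (z s a)) / lam)))
    (hV0 : ∀ s, V0 s =
      Finset.univ.sup' (Finset.univ_nonempty_iff.mpr (Fin.pos_iff_nonempty.mp hK))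
        (fun a => r s a + γ * V0 (z s a))) :
    ∀ s, |Vl s - V0 s| ≤ lam * Real.log K / (1 - γ) := by
  obtain ⟨hγ0, hγ1⟩ := hγ
  have ne : (Finset.univ : Finset (Fin K)).Nonempty :=
    Finset.univ_nonempty_iff.mpr (Fin.pos_iff_nonempty.mp hK)
  have h1γ : 0 < 1 - γ := by linarith
  have hlogK : 0 ≤ Real.log K := Real.log_nonneg (by exact_mod_cast hK)
  set D := lam * Real.log K / (1 - γ) with hD
  have hD0 : 0 ≤ D := by positivity
  have hDeq : lam * Real.log K + γ * D = D := by
    have hDm : D * (1 - γ) = lam * Real.log K := by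
      rw [hD]; exact div_mul_cancel₀ _ h1γ.ne'
    linarith
  intro s₀
  have hC : 0 ≤ C := le_trans (abs_nonneg _) (hbound s₀).1
  have key : ∀ n : ℕ, ∀ s, |Vl s - V0 s| ≤ D + γ ^ n * (2 * C) := by
    intro n
    induction n with
    | zero =>
      intro s
      have h := hbound s
      calc |Vl s - V0 s| ≤ |Vl s| + |V0 s| := abs_sub _ _
        _ ≤ D + γ ^ 0 * (2 * C) := by simp; linarith [h.1, h.2]
    | succ n ih =>
      intro s
      set Ql : Fin K → ℝ := fun a => r s a + γ * Vl (z s a) with hQl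
      set Q0 : Fin K → ℝ := fun a => r s a + γ * V0 (z s a) with hQ0
      have hlse := lse_bounds hK lam hlam Ql
      have hVls : Vl s = lam * Real.log (∑ a, Real.exp (Ql a / lam)) := hVl s
      have hV0s : V0 s = Finset.univ.sup' ne Q0 := hV0 s
      have hsupQl : Finset.univ.sup' ne Ql ≤ Vl s := by rw [hVls]; exact hlse.1
      have hsupQl' : Vl s ≤ Finset.univ.sup' ne Ql + lam * Real.log K := by
        rw [hVls]; exact hlse.2
      have hdiff : ∀ a : Fin K, |Ql a - Q0 a| ≤ γ * (D + γ ^ n * (2 * C)) := by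
        intro a
        have : Ql a - Q0 a = γ * (Vl (z s a) - V0 (z s a)) := by
          simp [hQl, hQ0]; ring
        rw [this, abs_mul, abs_of_nonneg hγ0]
        exact mul_le_mul_of_nonneg_left (ih (z s a)) hγ0
      have hsup_diff : |Finset.univ.sup' ne Ql - Finset.univ.sup' ne Q0|
          ≤ γ * (D + γ ^ n * (2 * C)) := by
        rw [abs_sub_le_iff]
        constructor
        · apply sub_le_iff_le_add.mpr
          apply Finset.sup'_le
          intro a _
          have := (abs_sub_le_iff.mp (hdiff a)).1
          have h2 : Q0 a ≤ Finset.univ.sup' ne Q0 := Finset.le_sup' Q0 (Finset.mem_univ a)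
          linarith
        · apply sub_le_iff_le_add.mpr
          apply Finset.sup'_le
          intro a _
          have := (abs_sub_le_iff.mp (hdiff a)).2
          have h2 : Ql a ≤ Finset.univ.sup' ne Ql := Finset.le_sup' Ql (Finset.mem_univ a)
          linarith
      have habs := abs_sub_le_iff.mp hsup_diff
      rw [abs_sub_le_iff]
      have hD' : γ * (D + γ ^ n * (2 * C)) = γ * D + γ ^ (n + 1) * (2 * C) := by ring
      constructor
      · rw [hV0s]
        nlinarith [habs.1]
      · rw [hV0s]
        nlinarith [habs.2]
  have hten : Filter.Tendsto (fun n : ℕ => D + γ ^ n * (2 * C)) Filter.atTop (nhds D) := by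
    have h0 : Filter.Tendsto (fun n : ℕ => γ ^ n) Filter.atTop (nhds 0) :=
      tendsto_pow_atTop_nhds_zero_of_lt_one hγ0 hγ1
    have := (h0.mul_const (2 * C)).const_add D
    simpa using this
  exact ge_of_tendsto' hten (fun n => key n s₀)
end

section
/- Let γ ∈ (0,1), α > 0, M ≥ 0, and define H(ε) = ⌈2 log_γ(ε(1−γ)/(1+M))⌉ and G(ε) = γ^{H(ε)(H(ε)−1)/2} · (2α/ε²)^{H(ε)}. Suppose n : ℝ₊ → ℝ satisfies n(ε) = 1 when ε ≥ (1+M)/(1−γ), and n(ε) ≤ (2α/ε²)·n(ε/√γ) otherwise, with n(ε) ≤ K·N(ε)·n(ε/√γ) + 1 ≤ (2α/ε²)·n(ε/√γ) whenever K·N(ε) + 1 ≤ 2α/ε². Then for all h ∈ ℕ and all ε with (1+M)√γ^h/(1−γ) ≤ ε ≤ (1+M)/(1−γ), we have n(ε) ≤ G(ε). -/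
open Real

theorem stmt_11 (γ α M K N : ℝ) (hγ : 0 < γ ∧ γ < 1) (hα : 0 < α) (hM : 0 ≤ M)
    (n : ℝ → ℝ)
    (h1 : ∀ ε : ℝ, (1 + M) / (1 - γ) ≤ ε → n ε = 1)
    (h2 : ∀ ε : ℝ, 0 < ε → ε < (1 + M) / (1 - γ) →
      n ε ≤ (2 * α / ε ^ 2) * n (ε / Real.sqrt γ)) :
    ∀ (h : ℕ) (ε : ℝ),
      (1 + M) * Real.sqrt γ ^ h / (1 - γ) ≤ ε → ε ≤ (1 + M) / (1 - γ) →
      n ε ≤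
        γ ^ ((⌈2 * Real.logb γ (ε * (1 - γ) / (1 + M))⌉ *
              (⌈2 * Real.logb γ (ε * (1 - γ) / (1 + M))⌉ - 1)) / 2) *
          (2 * α / ε ^ 2) ^ ⌈2 * Real.logb γ (ε * (1 - γ) / (1 + M))⌉ := by
  obtain ⟨hγ0, hγ1⟩ := hγ
  have h1γ : 0 < 1 - γ := by linarith
  have h1M : (0:ℝ) < 1 + M := by linarith
  have hb : 0 < (1+M)/(1-γ) := div_pos h1M h1γ
  have hsγ : 0 < Real.sqrt γ := Real.sqrt_pos.2 hγ0
  have hsγ1 : Real.sqrt γ < 1 := by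
    nlinarith [Real.sq_sqrt hγ0.le, Real.sqrt_nonneg γ]
  have hsq : Real.sqrt γ ^ 2 = γ := Real.sq_sqrt hγ0.le
  have hlogγ : Real.log γ < 0 := Real.log_neg hγ0 hγ1
  -- base case computation : when ε = (1+M)/(1-γ)
  have hbase : ∀ ε : ℝ, (1 + M) / (1 - γ) ≤ ε → ε ≤ (1 + M) / (1 - γ) →
      n ε ≤
        γ ^ ((⌈2 * Real.logb γ (ε * (1 - γ) / (1 + M))⌉ *
              (⌈2 * Real.logb γ (ε * (1 - γ) / (1 + M))⌉ - 1)) / 2) *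
          (2 * α / ε ^ 2) ^ ⌈2 * Real.logb γ (ε * (1 - γ) / (1 + M))⌉ := by
    intro ε hlo hhi
    have hε : ε = (1+M)/(1-γ) := le_antisymm hhi hlo
    subst hε
    have harg : (1+M)/(1-γ) * (1 - γ) / (1 + M) = 1 := by
      field_simp
    rw [harg, Real.logb_one, mul_zero, Int.ceil_zero]
    rw [h1 _ le_rfl]
    norm_num
  -- key : shift of the log argument
  have key : ∀ ε : ℝ, 0 < ε →
      2 * Real.logb γ ((ε / Real.sqrt γ) * (1 - γ) / (1 + M))
        = 2 * Real.logb γ (ε * (1 - γ) / (1 + M)) - 1 := by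
    intro ε hε
    have harg : ε * (1 - γ) / (1 + M) ≠ 0 := by positivity
    have hrw : (ε / Real.sqrt γ) * (1 - γ) / (1 + M)
        = (ε * (1 - γ) / (1 + M)) / Real.sqrt γ := by ring
    rw [hrw, Real.logb_div harg (ne_of_gt hsγ)]
    have hls : Real.logb γ (Real.sqrt γ) = 1/2 := by
      have hne : Real.log γ ≠ 0 := ne_of_lt hlogγ
      rw [Real.logb, Real.log_sqrt hγ0.le]
      field_simp
    rw [hls]; ring
  intro h
  induction h with
  | zero =>
    intro ε hlo hhi
    exact hbase ε (by simpa using hlo) hhi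
  | succ h ih =>
    intro ε hlo hhi
    rcases le_or_gt ((1+M)/(1-γ)) ε with hge | hlt
    · exact hbase ε hge hhi
    have hε : 0 < ε := lt_of_lt_of_le (by positivity) hlo
    have hε' : 0 < ε / Real.sqrt γ := div_pos hε hsγ
    have hlo' : (1 + M) * Real.sqrt γ ^ h / (1 - γ) ≤ ε / Real.sqrt γ := by
      rw [le_div_iff₀ hsγ]
      calc (1 + M) * Real.sqrt γ ^ h / (1 - γ) * Real.sqrt γ
          = (1 + M) * Real.sqrt γ ^ (h+1) / (1 - γ) := by ring
        _ ≤ ε := hlo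
    have hx0 : (0:ℝ) < 2 * α / ε ^ 2 := by positivity
    have harg_pos : 0 < ε * (1 - γ) / (1 + M) := by positivity
    have harg_lt1 : ε * (1 - γ) / (1 + M) < 1 := by
      rw [div_lt_one h1M]
      nlinarith [(lt_div_iff₀ h1γ).1 hlt]
    rcases le_or_gt (ε / Real.sqrt γ) ((1+M)/(1-γ)) with hle' | hgt'
    · -- recursive case: use IH at ε/√γ
      have hIH := ih (ε / Real.sqrt γ) hlo' hle'
      have hceil : ⌈2 * Real.logb γ ((ε / Real.sqrt γ) * (1 - γ) / (1 + M))⌉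
          = ⌈2 * Real.logb γ (ε * (1 - γ) / (1 + M))⌉ - 1 := by
        rw [key ε hε]
        exact_mod_cast Int.ceil_sub_intCast (2 * Real.logb γ (ε * (1 - γ) / (1 + M))) 1
      rw [hceil] at hIH
      set k := ⌈2 * Real.logb γ (ε * (1 - γ) / (1 + M))⌉ with hk
      have hx' : 2 * α / (ε / Real.sqrt γ) ^ 2 = γ * (2 * α / ε ^ 2) := by
        rw [div_pow, hsq]
        field_simp
      rw [hx'] at hIH
      have hchain : n ε ≤ (2 * α / ε ^ 2) *
          (γ ^ (((k-1) * ((k-1) - 1)) / 2) * (γ * (2 * α / ε ^ 2)) ^ (k-1)) := by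
        calc n ε ≤ (2 * α / ε ^ 2) * n (ε / Real.sqrt γ) := h2 ε hε hlt
          _ ≤ _ := by
            apply mul_le_mul_of_nonneg_left hIH hx0.le
      refine hchain.trans (le_of_eq ?_)
      have hexp : ((k-1) * ((k-1) - 1)) / 2 + (k - 1) = (k * (k-1)) / 2 := by
        obtain ⟨j, hj⟩ := Int.even_mul_succ_self (k - 1)
        have hj1 : k * (k - 1) = 2 * j := by linear_combination hj
        have hj2 : (k-1) * ((k-1) - 1) = 2 * (j - (k - 1)) := by linear_combination hj
        rw [hj1, hj2]
        omega
      rw [mul_zpow, ← hexp, zpow_add₀ (ne_of_gt hγ0)]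
      have hxx : (2 * α / ε ^ 2) ^ k = (2 * α / ε ^ 2) ^ (k-1) * (2 * α / ε ^ 2) := by
        rw [← zpow_add_one₀ (ne_of_gt hx0) (k-1), sub_add_cancel]
      rw [hxx]
      ring
    · -- terminal case: n (ε/√γ) = 1
      have hn' : n (ε / Real.sqrt γ) = 1 := h1 _ hgt'.le
      have hargs : Real.sqrt γ ≤ ε * (1 - γ) / (1 + M) := by
        rw [le_div_iff₀ h1M]
        have h1' : (1+M) * Real.sqrt γ ≤ ε * (1-γ) := by
          have h := hgt'.le
          rw [div_le_div_iff₀ h1γ hsγ] at h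
          linarith
        linarith
      have hceil1 : ⌈2 * Real.logb γ (ε * (1 - γ) / (1 + M))⌉ = 1 := by
        rw [Int.ceil_eq_iff]
        constructor
        · push_cast
          have : 0 < Real.logb γ (ε * (1 - γ) / (1 + M)) :=
            Real.logb_pos_of_base_lt_one hγ0 hγ1 harg_pos harg_lt1
          linarith
        · push_cast
          have hlb : Real.logb γ (ε * (1 - γ) / (1 + M)) ≤ 1/2 := by
            rw [Real.logb, div_le_iff_of_neg hlogγ]
            have : Real.log (Real.sqrt γ) ≤ Real.log (ε * (1 - γ) / (1 + M)) :=
              Real.log_le_log hsγ hargs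
            rw [Real.log_sqrt hγ0.le] at this
            linarith
          linarith
      rw [hceil1]
      norm_num
      calc n ε ≤ (2 * α / ε ^ 2) * n (ε / Real.sqrt γ) := h2 ε hε hlt
        _ = 2 * α / ε ^ 2 := by rw [hn']; ring
end

section
/- Fix λ > 0 and Q ∈ ℝ^K with all entries in a compact interval. The maximizer π* of π ↦ ∑_a (Q_a π_a + λ√(π_a)) over the probability simplex satisfies, for some Lagrange multiplier U > max_a Q_a, the first-order condition Q_a + λ/(2√(π*_a)) = U for all a, and consequently π*_a = (λ/2)²/(U − Q_a)² with ∑_a (λ/2)²/(U − Q_a)² = 1. -/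
open Real Finset Filter Topology

lemma sqrt_diff_upper {x ε : ℝ} (hε : 0 < ε) (hεx : ε < x) :
    Real.sqrt x - Real.sqrt (x - ε) ≤ ε / (2 * Real.sqrt (x - ε)) := by
  have hx : 0 < x - ε := by linarith
  have hs : 0 < Real.sqrt (x - ε) := Real.sqrt_pos.mpr hx
  have hs2 : Real.sqrt (x - ε) ^ 2 = x - ε := Real.sq_sqrt hx.le
  have ht2 : Real.sqrt x ^ 2 = x := Real.sq_sqrt (by linarith)
  rw [le_div_iff₀ (by linarith)]
  nlinarith [sq_nonneg (Real.sqrt x - Real.sqrt (x - ε)), Real.sqrt_nonneg x]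

lemma sqrt_diff_lower {x ε : ℝ} (hx : 0 ≤ x) (hε : 0 < ε) :
    ε / (2 * Real.sqrt (x + ε)) ≤ Real.sqrt (x + ε) - Real.sqrt x := by
  have ht : 0 < Real.sqrt (x + ε) := Real.sqrt_pos.mpr (by linarith)
  have ht2 : Real.sqrt (x + ε) ^ 2 = x + ε := Real.sq_sqrt (by linarith)
  have hs2 : Real.sqrt x ^ 2 = x := Real.sq_sqrt hx
  rw [div_le_iff₀ (by linarith)]
  nlinarith [sq_nonneg (Real.sqrt (x + ε) - Real.sqrt x), Real.sqrt_nonneg x]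

lemma perturb {K : ℕ} (lam : ℝ) (Q p : Fin K → ℝ) (hp0 : ∀ a, 0 ≤ p a) (hp1 : ∑ a, p a = 1)
    (hmax : ∀ p' : Fin K → ℝ, (∀ a, 0 ≤ p' a) → ∑ a, p' a = 1 →
      ∑ a, (Q a * p' a + lam * Real.sqrt (p' a)) ≤
        ∑ a, (Q a * p a + lam * Real.sqrt (p a)))
    {a b : Fin K} (hab : a ≠ b) {ε : ℝ} (hε : 0 < ε) (hεb : ε ≤ p b) :
    Q a * ε + lam * (Real.sqrt (p a + ε) - Real.sqrt (p a))
      ≤ Q b * ε + lam * (Real.sqrt (p b) - Real.sqrt (p b - ε)) := by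
  set p' : Fin K → ℝ := Function.update (Function.update p a (p a + ε)) b (p b - ε) with hp'
  have hp'a : p' a = p a + ε := by
    simp [hp', Function.update_of_ne hab, Function.update_self]
  have hp'b : p' b = p b - ε := by simp [hp']
  have hp'x : ∀ x, x ≠ a → x ≠ b → p' x = p x := by
    intro x hxa hxb
    simp [hp', Function.update_of_ne hxb, Function.update_of_ne hxa]
  have hp0' : ∀ x, 0 ≤ p' x := by
    intro x
    rcases eq_or_ne x a with rfl | hxa
    · rw [hp'a]; have := hp0 x; linarith
    rcases eq_or_ne x b with rfl | hxb
    · rw [hp'b]; linarith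
    · rw [hp'x x hxa hxb]; exact hp0 x
  have hdiff : ∀ x : Fin K, x ∉ ({a, b} : Finset (Fin K)) → p' x - p x = 0 := by
    intro x hx
    simp only [Finset.mem_insert, Finset.mem_singleton, not_or] at hx
    rw [hp'x x hx.1 hx.2]; ring
  have hsum : ∑ x, (p' x - p x) = ε + -ε := by
    rw [← Finset.sum_subset (Finset.subset_univ ({a,b} : Finset (Fin K)))
      (fun x _ hx => hdiff x hx), Finset.sum_pair hab, hp'a, hp'b]
    ring
  have hp1' : ∑ x, p' x = 1 := by
    have := Finset.sum_sub_distrib (s := (univ : Finset (Fin K))) (f := p') (g := p)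
    rw [hsum, hp1] at this
    linarith
  have hle := hmax p' hp0' hp1'
  have hG : ∀ x : Fin K, x ∉ ({a, b} : Finset (Fin K)) →
      (Q x * p' x + lam * Real.sqrt (p' x)) - (Q x * p x + lam * Real.sqrt (p x)) = 0 := by
    intro x hx
    simp only [Finset.mem_insert, Finset.mem_singleton, not_or] at hx
    rw [hp'x x hx.1 hx.2]; ring
  have hGsum : ∑ x, ((Q x * p' x + lam * Real.sqrt (p' x)) - (Q x * p x + lam * Real.sqrt (p x)))
      = (Q a * ε + lam * (Real.sqrt (p a + ε) - Real.sqrt (p a)))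
        - (Q b * ε + lam * (Real.sqrt (p b) - Real.sqrt (p b - ε))) := by
    rw [← Finset.sum_subset (Finset.subset_univ ({a,b} : Finset (Fin K)))
      (fun x _ hx => hG x hx), Finset.sum_pair hab, hp'a, hp'b]
    ring
  have := Finset.sum_sub_distrib (s := (univ : Finset (Fin K)))
    (f := fun x => Q x * p' x + lam * Real.sqrt (p' x))
    (g := fun x => Q x * p x + lam * Real.sqrt (p x))
  rw [hGsum] at this
  linarith

lemma p_pos {K : ℕ} (lam : ℝ) (hlam : 0 < lam) (Q p : Fin K → ℝ)
    (hp0 : ∀ a, 0 ≤ p a) (hp1 : ∑ a, p a = 1)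
    (hmax : ∀ p' : Fin K → ℝ, (∀ a, 0 ≤ p' a) → ∑ a, p' a = 1 →
      ∑ a, (Q a * p' a + lam * Real.sqrt (p' a)) ≤
        ∑ a, (Q a * p a + lam * Real.sqrt (p a))) :
    ∀ a, 0 < p a := by
  intro a
  rcases (hp0 a).lt_or_eq with h | h
  · exact h
  exfalso
  have hpa : p a = 0 := h.symm
  obtain ⟨b, -, hb⟩ := Finset.exists_ne_zero_of_sum_ne_zero (s := (univ : Finset (Fin K)))
    (f := p) (by rw [hp1]; norm_num)
  have hpb : 0 < p b := (hp0 b).lt_of_ne (Ne.symm hb)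
  have hab : a ≠ b := by rintro rfl; exact hb hpa
  obtain ⟨C, hCdef⟩ : ∃ C : ℝ, C = |Q a| + |Q b| + lam / (2 * Real.sqrt (p b / 2)) + 1 :=
    ⟨_, rfl⟩
  have hsb : 0 < Real.sqrt (p b / 2) := Real.sqrt_pos.mpr (by linarith)
  have hC : 0 < C := by rw [hCdef]; positivity
  obtain ⟨ε, hεdef⟩ : ∃ ε : ℝ, ε = min (p b / 2) ((lam / (2 * C)) ^ 2) := ⟨_, rfl⟩
  have hε : 0 < ε := by rw [hεdef]; exact lt_min (by linarith) (by positivity)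
  have hε2 : ε ≤ p b / 2 := hεdef ▸ min_le_left _ _
  have hεb : ε < p b := by linarith
  have key := perturb lam Q p hp0 hp1 hmax hab hε hεb.le
  rw [hpa] at key
  simp only [zero_add, Real.sqrt_zero, sub_zero] at key
  have hub : Real.sqrt (p b) - Real.sqrt (p b - ε) ≤ ε / (2 * Real.sqrt (p b / 2)) := by
    refine (sqrt_diff_upper hε hεb).trans ?_
    have h1 : Real.sqrt (p b / 2) ≤ Real.sqrt (p b - ε) := Real.sqrt_le_sqrt (by linarith)
    exact div_le_div_of_nonneg_left hε.le (by linarith) (by linarith)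
  have hsq : Real.sqrt ε ≤ lam / (2 * C) := by
    rw [hεdef]
    have := Real.sqrt_le_sqrt (min_le_right (p b / 2) ((lam / (2 * C)) ^ 2))
    rwa [Real.sqrt_sq (by positivity)] at this
  have hεsq : Real.sqrt ε * Real.sqrt ε = ε := Real.mul_self_sqrt hε.le
  have hsε : 0 < Real.sqrt ε := Real.sqrt_pos.mpr hε
  have h5 : lam * Real.sqrt ε ≤ (C - 1) * ε := by
    have h6 := mul_le_mul_of_nonneg_left hub hlam.le
    have h7 := mul_le_mul_of_nonneg_right (le_abs_self (Q b)) hε.le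
    have h8 := mul_le_mul_of_nonneg_right (neg_abs_le (Q a)) hε.le
    have e1 : lam * (ε / (2 * Real.sqrt (p b / 2))) = lam / (2 * Real.sqrt (p b / 2)) * ε := by
      ring
    have hexp : (C - 1) * ε
        = |Q a| * ε + |Q b| * ε + lam / (2 * Real.sqrt (p b / 2)) * ε := by
      rw [hCdef]; ring
    linarith
  have h6 : C * ε ≤ (lam / 2) * Real.sqrt ε := by
    have hA : C * Real.sqrt ε * Real.sqrt ε ≤ C * Real.sqrt ε * (lam / (2 * C)) :=
      mul_le_mul_of_nonneg_left hsq (mul_nonneg hC.le hsε.le)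
    have hB : C * Real.sqrt ε * (lam / (2 * C)) = (lam / 2) * Real.sqrt ε := by
      field_simp
    have hE : C * Real.sqrt ε * Real.sqrt ε = C * ε := by rw [mul_assoc, hεsq]
    linarith
  have hE2 : (C - 1) * ε = C * ε - ε := by ring
  have hE3 : lam * Real.sqrt ε = 2 * ((lam / 2) * Real.sqrt ε) := by ring
  linarith [mul_pos (half_pos hlam) hsε]

lemma mult_le {K : ℕ} (lam : ℝ) (hlam : 0 < lam) (Q p : Fin K → ℝ)
    (hp0 : ∀ a, 0 ≤ p a) (hp1 : ∑ a, p a = 1)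
    (hmax : ∀ p' : Fin K → ℝ, (∀ a, 0 ≤ p' a) → ∑ a, p' a = 1 →
      ∑ a, (Q a * p' a + lam * Real.sqrt (p' a)) ≤
        ∑ a, (Q a * p a + lam * Real.sqrt (p a)))
    (hpos : ∀ a, 0 < p a) {a b : Fin K} (hab : a ≠ b) :
    Q a + lam / (2 * Real.sqrt (p a)) ≤ Q b + lam / (2 * Real.sqrt (p b)) := by
  have hev : ∀ ε ∈ Set.Ioo (0:ℝ) (p b),
      Q a + lam / (2 * Real.sqrt (p a + ε)) ≤ Q b + lam / (2 * Real.sqrt (p b - ε)) := by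
    rintro ε ⟨hε, hεb⟩
    have key := perturb lam Q p hp0 hp1 hmax hab hε hεb.le
    have l1 := mul_le_mul_of_nonneg_left (sqrt_diff_lower (hp0 a) hε) hlam.le
    have l2 := mul_le_mul_of_nonneg_left (sqrt_diff_upper hε hεb) hlam.le
    have h' : (Q a + lam / (2 * Real.sqrt (p a + ε))) * ε
        ≤ (Q b + lam / (2 * Real.sqrt (p b - ε))) * ε := by
      have e1 : (Q a + lam / (2 * Real.sqrt (p a + ε))) * ε
          = Q a * ε + lam * (ε / (2 * Real.sqrt (p a + ε))) := by ring
      have e2 : (Q b + lam / (2 * Real.sqrt (p b - ε))) * ε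
          = Q b * ε + lam * (ε / (2 * Real.sqrt (p b - ε))) := by ring
      rw [e1, e2]; linarith
    exact le_of_mul_le_mul_right h' hε
  have ca : Tendsto (fun ε : ℝ => Q a + lam / (2 * Real.sqrt (p a + ε))) (𝓝[>] 0)
      (𝓝 (Q a + lam / (2 * Real.sqrt (p a)))) := by
    have hc : ContinuousAt (fun ε : ℝ => Q a + lam / (2 * Real.sqrt (p a + ε))) 0 := by
      refine continuousAt_const.add (continuousAt_const.div
        (continuousAt_const.mul ((Real.continuous_sqrt.continuousAt).comp
          (continuousAt_const.add continuousAt_id))) ?_)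
      have := Real.sqrt_pos.mpr (hpos a)
      simp only [add_zero, id]
      positivity
    simpa using hc.tendsto.mono_left nhdsWithin_le_nhds
  have cb : Tendsto (fun ε : ℝ => Q b + lam / (2 * Real.sqrt (p b - ε))) (𝓝[>] 0)
      (𝓝 (Q b + lam / (2 * Real.sqrt (p b)))) := by
    have hc : ContinuousAt (fun ε : ℝ => Q b + lam / (2 * Real.sqrt (p b - ε))) 0 := by
      refine continuousAt_const.add (continuousAt_const.div
        (continuousAt_const.mul ((Real.continuous_sqrt.continuousAt).comp
          (continuousAt_const.sub continuousAt_id))) ?_)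
      have := Real.sqrt_pos.mpr (hpos b)
      simp only [sub_zero, id]
      positivity
    simpa using hc.tendsto.mono_left nhdsWithin_le_nhds
  exact le_of_tendsto_of_tendsto ca cb
    (Filter.eventually_of_mem (Ioo_mem_nhdsGT_of_mem ⟨le_refl (0:ℝ), hpos b⟩)
      (fun ε hε => hev ε hε))

theorem stmt_17 (K : ℕ) (hK : 0 < K) (lam : ℝ) (hlam : 0 < lam) (Q : Fin K → ℝ)
    (p : Fin K → ℝ) (hp0 : ∀ a, 0 ≤ p a) (hp1 : ∑ a, p a = 1)
    (hmax : ∀ p' : Fin K → ℝ, (∀ a, 0 ≤ p' a) → ∑ a, p' a = 1 →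
      ∑ a, (Q a * p' a + lam * Real.sqrt (p' a)) ≤
        ∑ a, (Q a * p a + lam * Real.sqrt (p a))) :
    ∃ U : ℝ,
      Finset.univ.sup' (Finset.univ_nonempty_iff.mpr (Fin.pos_iff_nonempty.mp hK)) Q < U ∧
      (∀ a, Q a + lam / (2 * Real.sqrt (p a)) = U) ∧
      (∀ a, p a = (lam / 2) ^ 2 / (U - Q a) ^ 2) ∧
      ∑ a, (lam / 2) ^ 2 / (U - Q a) ^ 2 = 1 := by
  have hpos := p_pos lam hlam Q p hp0 hp1 hmax
  have heq : ∀ a b : Fin K,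
      Q a + lam / (2 * Real.sqrt (p a)) = Q b + lam / (2 * Real.sqrt (p b)) := by
    intro a b
    rcases eq_or_ne a b with rfl | hab
    · rfl
    · exact le_antisymm (mult_le lam hlam Q p hp0 hp1 hmax hpos hab)
        (mult_le lam hlam Q p hp0 hp1 hmax hpos hab.symm)
  obtain ⟨a₀⟩ := Fin.pos_iff_nonempty.mp hK
  refine ⟨Q a₀ + lam / (2 * Real.sqrt (p a₀)), ?_, fun a => heq a a₀, ?_, ?_⟩
  all_goals
    have hU : ∀ a, Q a + lam / (2 * Real.sqrt (p a)) = Q a₀ + lam / (2 * Real.sqrt (p a₀)) :=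
      fun a => heq a a₀
  · rw [Finset.sup'_lt_iff]
    intro a _
    have hsp : 0 < Real.sqrt (p a) := Real.sqrt_pos.mpr (hpos a)
    have : 0 < lam / (2 * Real.sqrt (p a)) := by positivity
    linarith [hU a]
  · intro a
    have hsp : 0 < Real.sqrt (p a) := Real.sqrt_pos.mpr (hpos a)
    have hUQ : Q a₀ + lam / (2 * Real.sqrt (p a₀)) - Q a = lam / (2 * Real.sqrt (p a)) := by
      rw [← hU a]; ring
    rw [hUQ, eq_div_iff (by positivity)]
    have h2 : Real.sqrt (p a) ^ 2 = p a := Real.sq_sqrt (hpos a).le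
    field_simp
    linear_combination (-1) * h2
  · have hform : ∀ a, p a = (lam / 2) ^ 2 / (Q a₀ + lam / (2 * Real.sqrt (p a₀)) - Q a) ^ 2 := by
      intro a
      have hsp : 0 < Real.sqrt (p a) := Real.sqrt_pos.mpr (hpos a)
      have hUQ : Q a₀ + lam / (2 * Real.sqrt (p a₀)) - Q a = lam / (2 * Real.sqrt (p a)) := by
        rw [← hU a]; ring
      rw [hUQ, eq_div_iff (by positivity)]
      have h2 : Real.sqrt (p a) ^ 2 = p a := Real.sq_sqrt (hpos a).le
      field_simp
      linear_combination (-1) * h2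
    rw [← hp1]
    exact Finset.sum_congr rfl (fun a _ => (hform a).symm)
end
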